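/- For every δ ∈ ℂ and 1 ≤ k ≤ N−1, define τ_k(δ) := (−1)^{k−1}·w_{k−1}(δ)^*·(A − δI_n)·v_k. Then s_k(δ) = h_{k+1,k}/√(h_{k+1,k}² + |τ_k(δ)|²) and c_k(δ) = τ_k(δ)/√(h_{k+1,k}² + |τ_k(δ)|²). -/

import Mathlib

open Polynomial Matrix Finset

/-- The standard inner product `x^* y` on `ℂ^n` (conjugate-linear in the first slot). -/
noncomputable def inn {n : ℕ} (x y : Fin n → ℂ) : ℂ := ∑ i, (starRingEnd ℂ) (x i) * y i

/-- The Euclidean norm on `ℂ^n`. -/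
noncomputable def nrm {n : ℕ} (x : Fin n → ℂ) : ℝ := Real.sqrt (inn x x).re

/-- `σ_k(δ) = sqrt(Σ_{j=0}^k |q_j(δ)|²)`. -/
noncomputable def sigmaP (q : ℕ → Polynomial ℂ) (δ : ℂ) (k : ℕ) : ℝ :=
  Real.sqrt (∑ j ∈ Finset.range (k + 1), ‖(q j).eval δ‖ ^ 2)

/-! ### Auxiliary lemmas about `inn` -/

lemma inn_add_left {n : ℕ} (x y z : Fin n → ℂ) : inn (x + y) z = inn x z + inn y z := by
  simp [inn, Finset.sum_add_distrib, add_mul]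

lemma inn_smul_left {n : ℕ} (c : ℂ) (x y : Fin n → ℂ) :
    inn (c • x) y = (starRingEnd ℂ) c * inn x y := by
  simp [inn, Finset.mul_sum, mul_assoc]

lemma inn_smul_right {n : ℕ} (c : ℂ) (x y : Fin n → ℂ) : inn x (c • y) = c * inn x y := by
  simp [inn, Finset.mul_sum]; apply Finset.sum_congr rfl; intros; ring

lemma inn_add_right {n : ℕ} (x y z : Fin n → ℂ) : inn x (y + z) = inn x y + inn x z := by
  simp [inn, Finset.sum_add_distrib, mul_add]

lemma inn_sub_left {n : ℕ} (x y z : Fin n → ℂ) : inn (x - y) z = inn x z - inn y z := by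
  simp [inn, Finset.sum_sub_distrib, sub_mul]

lemma inn_sub_right {n : ℕ} (x y z : Fin n → ℂ) : inn x (y - z) = inn x y - inn x z := by
  simp [inn, Finset.sum_sub_distrib, mul_sub]

lemma inn_zero_left {n : ℕ} (x : Fin n → ℂ) : inn 0 x = 0 := by simp [inn]

lemma inn_conj {n : ℕ} (x y : Fin n → ℂ) : inn x y = (starRingEnd ℂ) (inn y x) := by
  simp [inn, map_sum, mul_comm]

lemma inn_sum_left {n : ℕ} {ι : Type*} (s : Finset ι) (f : ι → Fin n → ℂ) (y : Fin n → ℂ) :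
    inn (∑ i ∈ s, f i) y = ∑ i ∈ s, inn (f i) y := by
  simp [inn, Finset.sum_apply, map_sum, Finset.sum_mul]
  exact Finset.sum_comm

lemma inn_sum_right {n : ℕ} {ι : Type*} (s : Finset ι) (f : ι → Fin n → ℂ) (y : Fin n → ℂ) :
    inn y (∑ i ∈ s, f i) = ∑ i ∈ s, inn y (f i) := by
  simp [inn, Finset.sum_apply, Finset.mul_sum]
  exact Finset.sum_comm

lemma inn_self_re {n : ℕ} (x : Fin n → ℂ) :
    inn x x = ((∑ i, Complex.normSq (x i) : ℝ) : ℂ) := by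
  simp [inn, ← Complex.normSq_eq_conj_mul_self]

lemma inn_self_eq_zero {n : ℕ} {x : Fin n → ℂ} (h : inn x x = 0) : x = 0 := by
  rw [inn_self_re] at h
  norm_cast at h
  have := (Finset.sum_eq_zero_iff_of_nonneg (fun i _ => Complex.normSq_nonneg (x i))).mp h
  funext i
  simpa [Complex.normSq_eq_zero] using this i (Finset.mem_univ i)

lemma inn_osum {n N : ℕ} (v : ℕ → Fin n → ℂ)
    (horth : ∀ i j : ℕ, i < N → j < N → inn (v i) (v j) = if i = j then 1 else 0)
    {a c : ℕ} (ha : a ≤ N) (hc : c ≤ N) (f g : ℕ → ℂ) :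
    inn (∑ j ∈ range a, f j • v j) (∑ i ∈ range c, g i • v i)
      = ∑ j ∈ range (min a c), (starRingEnd ℂ) (f j) * g j := by
  rw [inn_sum_left]
  have key : ∀ j ∈ range a, inn (f j • v j) (∑ i ∈ range c, g i • v i)
      = if j < c then (starRingEnd ℂ) (f j) * g j else 0 := by
    intro j hj
    rw [inn_smul_left, inn_sum_right]
    have : ∀ i ∈ range c, inn (v j) (g i • v i) = if i = j then g i else 0 := by
      intro i hi
      rw [inn_smul_right, horth j i (lt_of_lt_of_le (mem_range.mp hj) ha)
        (lt_of_lt_of_le (mem_range.mp hi) hc)]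
      rcases eq_or_ne i j with h | h
      · simp [h]
      · simp [h, Ne.symm h]
    rw [Finset.sum_congr rfl this, Finset.sum_ite_eq' (range c) j g]
    by_cases h : j < c <;> simp [h, mul_comm]
  rw [Finset.sum_congr rfl key, Finset.sum_ite, Finset.sum_const_zero, add_zero]
  apply Finset.sum_congr _ (fun _ _ => rfl)
  ext j
  simp [Nat.lt_min, and_comm]

/-! ### Sum manipulation helpers -/

lemma sum_combine3 {n : ℕ} (v : ℕ → Fin n → ℂ) (m : ℕ) (a b c : ℕ → ℂ) (β : ℂ)
    (hlast : b (m + 1) + β * c (m + 1) = 0) :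
    (∑ j ∈ range (m + 1), a j • v j) - (∑ j ∈ range (m + 2), b j • v j)
      - β • (∑ j ∈ range (m + 2), c j • v j)
    = ∑ j ∈ range (m + 1), (a j - b j - β * c j) • v j := by
  have h1 : (∑ j ∈ range (m + 2), b j • v j)
      = (∑ j ∈ range (m + 1), b j • v j) + b (m + 1) • v (m + 1) := Finset.sum_range_succ _ _
  have h2 : (∑ j ∈ range (m + 2), c j • v j)
      = (∑ j ∈ range (m + 1), c j • v j) + c (m + 1) • v (m + 1) := Finset.sum_range_succ _ _
  rw [h1, h2, smul_add, Finset.smul_sum]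
  simp only [smul_smul]
  have ht : b (m + 1) • v (m + 1) + (β * c (m + 1)) • v (m + 1) = 0 := by
    rw [← add_smul, hlast, zero_smul]
  have hs : (∑ j ∈ range (m + 1), (a j - b j - β * c j) • v j)
      = (∑ j ∈ range (m + 1), a j • v j) - (∑ j ∈ range (m + 1), b j • v j)
        - (∑ j ∈ range (m + 1), (β * c j) • v j) := by
    rw [← Finset.sum_sub_distrib, ← Finset.sum_sub_distrib]
    exact Finset.sum_congr rfl fun j _ => by rw [sub_smul, sub_smul]
  calc (∑ j ∈ range (m + 1), a j • v j)
        - ((∑ j ∈ range (m + 1), b j • v j) + b (m + 1) • v (m + 1))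
        - ((∑ j ∈ range (m + 1), (β * c j) • v j) + (β * c (m + 1)) • v (m + 1))
      = ((∑ j ∈ range (m + 1), a j • v j) - (∑ j ∈ range (m + 1), b j • v j)
          - (∑ j ∈ range (m + 1), (β * c j) • v j))
        - (b (m + 1) • v (m + 1) + (β * c (m + 1)) • v (m + 1)) := by abel
    _ = _ := by rw [ht, sub_zero, ← hs]

lemma extract_last {n : ℕ} (v : ℕ → Fin n → ℂ) (m : ℕ) (c : ℕ → ℂ) (x : Fin n → ℂ)
    (hx : x = ∑ j ∈ range (m + 2), c j • v j) (hc : c (m + 1) ≠ 0) :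
    v (m + 1) = (c (m + 1))⁻¹ • (x - ∑ j ∈ range (m + 1), c j • v j) := by
  rw [hx, Finset.sum_range_succ, add_sub_cancel_left, smul_smul, inv_mul_cancel₀ hc, one_smul]

/-! ### Local abbreviations -/

noncomputable def Hc {N : ℕ} (H : Matrix (Fin N) (Fin N) ℂ) (i j : ℕ) : ℂ :=
  if h : i < N ∧ j < N then H ⟨i, h.1⟩ ⟨j, h.2⟩ else 0

lemma Hc_eq {N : ℕ} (H : Matrix (Fin N) (Fin N) ℂ) {i j : ℕ} (hi : i < N) (hj : j < N) :
    Hc H i j = H ⟨i, hi⟩ ⟨j, hj⟩ := by rw [Hc, dif_pos ⟨hi, hj⟩]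

noncomputable def sig2 (q : ℕ → Polynomial ℂ) (δ : ℂ) (m : ℕ) : ℝ :=
  ∑ j ∈ Finset.range (m + 1), ‖(q j).eval δ‖ ^ 2

noncomputable def rho {n : ℕ} (v : ℕ → Fin n → ℂ) (b : Fin n → ℂ)
    (q : ℕ → Polynomial ℂ) (δ : ℂ) (m : ℕ) : Fin n → ℂ :=
  ∑ j ∈ Finset.range (m + 1),
    (((nrm b / sig2 q δ m : ℝ) : ℂ) * (starRingEnd ℂ) ((q j).eval δ)) • v j

/-- With `τ_k(δ) = (-1)^{k-1} w_{k-1}(δ)^* (A - δI) v_k`, one has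
`s_k(δ) = h_{k+1,k}/√(h_{k+1,k}² + |τ_k(δ)|²)` and
`c_k(δ) = τ_k(δ)/√(h_{k+1,k}² + |τ_k(δ)|²)`
(`0`-based: `h_{k+1,k}` is the real number `(H ⟨k,_⟩ ⟨k-1,_⟩).re` and `v_k` is `v (k-1)`). -/
theorem stmt11 (n N : ℕ) (hN : 1 ≤ N) (hNn : N ≤ n)
    (A : Matrix (Fin n) (Fin n) ℂ) (b : Fin n → ℂ) (hb : b ≠ 0)
    (v : ℕ → Fin n → ℂ)
    (horth : ∀ i j : ℕ, i < N → j < N → inn (v i) (v j) = if i = j then 1 else 0)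
    (hv1 : v 0 = (((nrm b)⁻¹ : ℝ) : ℂ) • b)
    (H : Matrix (Fin N) (Fin N) ℂ)
    (hHess : ∀ i j : Fin N, (j : ℕ) + 1 < (i : ℕ) → H i j = 0)
    (hsub : ∀ (k : ℕ) (hk : k + 1 < N),
      0 < (H ⟨k + 1, hk⟩ ⟨k, Nat.lt_of_succ_lt hk⟩).re ∧
        (H ⟨k + 1, hk⟩ ⟨k, Nat.lt_of_succ_lt hk⟩).im = 0)
    (harn : ∀ (k : ℕ) (hk : k + 1 < N),
      A.mulVec (v k) = ∑ j : Fin (k + 2),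
        H ⟨(j : ℕ), Nat.lt_of_le_of_lt (Nat.lt_succ_iff.mp j.isLt) hk⟩
          ⟨k, Nat.lt_of_succ_lt hk⟩ • v (j : ℕ))
    (harnN : A.mulVec (v (N - 1)) =
      ∑ j : Fin N, H j ⟨N - 1, Nat.sub_lt hN Nat.one_pos⟩ • v (j : ℕ))
    (q : ℕ → Polynomial ℂ) (hq0 : q 0 = 1)
    (hqrec : ∀ (k : ℕ) (hk : k + 1 < N),
      Polynomial.C (H ⟨k + 1, hk⟩ ⟨k, Nat.lt_of_succ_lt hk⟩) * q (k + 1) =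
        Polynomial.X * q k -
          ∑ j : Fin (k + 1),
            Polynomial.C (H ⟨(j : ℕ), Nat.lt_trans j.isLt hk⟩ ⟨k, Nat.lt_of_succ_lt hk⟩) *
              q (j : ℕ))
    (u : ℂ → ℕ → Fin n → ℂ)
    (humem : ∀ (δ : ℂ) (k : ℕ), k < N →
      u δ k ∈ Submodule.span ℂ {x : Fin n → ℂ | ∃ j < k, x = (A - δ • 1).mulVec (v j)})
    (huperp : ∀ (δ : ℂ) (k : ℕ), k < N →
      ∀ y ∈ Submodule.span ℂ {x : Fin n → ℂ | ∃ j < k, x = (A - δ • 1).mulVec (v j)},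
        inn y (b - u δ k) = 0)
    (r : ℂ → ℕ → Fin n → ℂ) (hr : ∀ δ k, r δ k = b - u δ k)
    (hrne : ∀ (δ : ℂ) (k : ℕ), k < N → r δ k ≠ 0)
    (w : ℂ → ℕ → Fin n → ℂ) (hw : ∀ δ k, w δ k = (((nrm (r δ k))⁻¹ : ℝ) : ℂ) • r δ k)
 :
    ∀ (δ : ℂ) (k : ℕ) (hk1 : 1 ≤ k) (hkN : k < N) (τ : ℂ),
      τ = (-1 : ℂ) ^ (k - 1) * inn (w δ (k - 1)) ((A - δ • 1).mulVec (v (k - 1))) →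
      sigmaP q δ (k - 1) / sigmaP q δ k =
        (H ⟨k, hkN⟩ ⟨k - 1, Nat.lt_of_le_of_lt (Nat.sub_le k 1) hkN⟩).re /
          Real.sqrt ((H ⟨k, hkN⟩ ⟨k - 1, Nat.lt_of_le_of_lt (Nat.sub_le k 1) hkN⟩).re ^ 2 +
            ‖τ‖ ^ 2) ∧
      (-1 : ℂ) ^ k * (q k).eval δ / (sigmaP q δ k : ℂ) =
        τ / ((Real.sqrt ((H ⟨k, hkN⟩ ⟨k - 1, Nat.lt_of_le_of_lt (Nat.sub_le k 1) hkN⟩).re ^ 2 +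
            ‖τ‖ ^ 2) : ℝ) : ℂ) := by
  intro δ k hk1 hkN τ hτ
  have hq0e : (q 0).eval δ = 1 := by rw [hq0]; simp
  have hnb : 0 < nrm b := by
    rw [nrm]
    apply Real.sqrt_pos.mpr
    rw [inn_self_re b, Complex.ofReal_re]
    rcases (Finset.sum_nonneg fun i _ => Complex.normSq_nonneg (b i)).lt_or_eq with h | h
    · exact h
    · exact absurd (inn_self_eq_zero (by rw [inn_self_re b, ← h]; simp)) hb
  have hs2pos : ∀ m, 0 < sig2 q δ m := by
    intro m
    have h1 : (1 : ℝ) ≤ sig2 q δ m := by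
      have := Finset.single_le_sum (f := fun j => ‖(q j).eval δ‖ ^ 2)
        (fun i _ => sq_nonneg _) (Finset.mem_range.mpr (Nat.succ_pos m))
      simpa [sig2, hq0e] using this
    linarith
  have hWsum : ∀ m, m + 1 < N → (A - δ • 1).mulVec (v m) =
      ∑ i ∈ range (m + 2), (Hc H i m - if i = m then δ else 0) • v i := by
    intro m hm
    have hAv : A.mulVec (v m) = ∑ i ∈ range (m + 2), Hc H i m • v i := by
      rw [harn m hm, ← Fin.sum_univ_eq_sum_range (fun i => Hc H i m • v i) (m + 2)]
      refine Finset.sum_congr rfl fun j _ => ?_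
      congr 1
      exact (Hc_eq H (Nat.lt_of_le_of_lt (Nat.lt_succ_iff.mp j.isLt) hm)
        (Nat.lt_of_succ_lt hm)).symm
    have hsplit : (A - δ • 1).mulVec (v m) = A.mulVec (v m) - δ • v m := by
      rw [Matrix.sub_mulVec, Matrix.smul_mulVec, Matrix.one_mulVec]
    have h2 : ∀ i ∈ range (m + 2), (Hc H i m - if i = m then δ else 0) • v i
        = Hc H i m • v i - (if i = m then δ • v i else 0) := by
      intro i _
      split <;> simp [sub_smul]
    rw [hsplit, hAv, Finset.sum_congr rfl h2, Finset.sum_sub_distrib,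
      Finset.sum_ite_eq' (range (m + 2)) m (fun i => δ • v i),
      if_pos (Finset.mem_range.mpr (by omega))]
  have hqrec' : ∀ m, m + 1 < N →
      Hc H (m + 1) m * (q (m + 1)).eval δ
        = δ * (q m).eval δ - ∑ j ∈ range (m + 1), Hc H j m * (q j).eval δ := by
    intro m hm
    have h0 := congrArg (Polynomial.eval δ) (hqrec m hm)
    simp only [Polynomial.eval_mul, Polynomial.eval_C, Polynomial.eval_X, Polynomial.eval_sub,
      Polynomial.eval_finset_sum] at h0
    rw [Hc_eq H hm (Nat.lt_of_succ_lt hm), h0]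
    congr 1
    rw [← Fin.sum_univ_eq_sum_range (fun j => Hc H j m * (q j).eval δ) (m + 1)]
    refine Finset.sum_congr rfl fun j _ => ?_
    rw [Hc_eq H (Nat.lt_trans j.isLt hm) (Nat.lt_of_succ_lt hm)]
  have hkey : ∀ m, m + 1 < N →
      ∑ i ∈ range (m + 2), (Hc H i m - if i = m then δ else 0) * (q i).eval δ = 0 := by
    intro m hm
    have hrec := hqrec' m hm
    rw [Finset.sum_range_succ]
    have h2 : ∀ i ∈ range (m + 1), (Hc H i m - if i = m then δ else 0) * (q i).eval δ
        = Hc H i m * (q i).eval δ - (if i = m then δ * (q m).eval δ else 0) := by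
      intro i _
      rcases eq_or_ne i m with h | h
      · subst h; simp [sub_mul]
      · simp [h]
    rw [Finset.sum_congr rfl h2, Finset.sum_sub_distrib,
      Finset.sum_ite_eq' (range (m + 1)) m (fun _ => δ * (q m).eval δ),
      if_pos (Finset.mem_range.mpr (Nat.lt_succ_self m)), if_neg (by omega : ¬ m + 1 = m)]
    linear_combination hrec
  have hWrho : ∀ m j : ℕ, m < N → j < m →
      inn ((A - δ • 1).mulVec (v j)) (rho v b q δ m) = 0 := by
    intro m j hm hj
    have hj1 : j + 1 < N := by omega
    calc inn ((A - δ • 1).mulVec (v j)) (rho v b q δ m)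
        = ∑ i ∈ range (min (j + 2) (m + 1)),
            (starRingEnd ℂ) (Hc H i j - if i = j then δ else 0)
              * (((nrm b / sig2 q δ m : ℝ) : ℂ) * (starRingEnd ℂ) ((q i).eval δ)) := by
          rw [hWsum j hj1, rho]
          exact inn_osum v horth (by omega) (by omega) _ _
      _ = ((nrm b / sig2 q δ m : ℝ) : ℂ) * (starRingEnd ℂ)
            (∑ i ∈ range (j + 2), (Hc H i j - if i = j then δ else 0) * (q i).eval δ) := by
          rw [min_eq_left (by omega), map_sum, Finset.mul_sum]
          exact Finset.sum_congr rfl fun i _ => by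
            rw [_root_.map_mul]; ring
      _ = 0 := by rw [hkey j hj1]; simp
  have hSperp : ∀ m m' : ℕ, m ≤ m' → m' < N →
      ∀ y ∈ Submodule.span ℂ {x : Fin n → ℂ | ∃ j < m, x = (A - δ • 1).mulVec (v j)},
        inn y (rho v b q δ m') = 0 := by
    intro m m' hmm' hm' y hy
    induction hy using Submodule.span_induction with
    | mem x hx => obtain ⟨j, hj, rfl⟩ := hx; exact hWrho m' j hm' (by omega)
    | zero => exact inn_zero_left _
    | add x y hx hy ihx ihy => rw [inn_add_left, ihx, ihy, add_zero]
    | smul a x hx ih => rw [inn_smul_left, ih, mul_zero]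
  have hrr : ∀ a m : ℕ, m ≤ a → a < N →
      inn (rho v b q δ a) (rho v b q δ m) = ((nrm b ^ 2 / sig2 q δ a : ℝ) : ℂ) := by
    intro a m hma haN
    calc inn (rho v b q δ a) (rho v b q δ m)
        = ∑ j ∈ range (min (a + 1) (m + 1)),
            (starRingEnd ℂ)
                (((nrm b / sig2 q δ a : ℝ) : ℂ) * (starRingEnd ℂ) ((q j).eval δ))
              * (((nrm b / sig2 q δ m : ℝ) : ℂ) * (starRingEnd ℂ) ((q j).eval δ)) := by
          rw [rho, rho]
          exact inn_osum v horth (by omega) (by omega) _ _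
      _ = ∑ j ∈ range (m + 1),
            (((nrm b / sig2 q δ a) * (nrm b / sig2 q δ m)
              * ‖(q j).eval δ‖ ^ 2 : ℝ) : ℂ) := by
          rw [min_eq_right (by omega)]
          refine Finset.sum_congr rfl fun j _ => ?_
          have hmc : ((q j).eval δ) * (starRingEnd ℂ) ((q j).eval δ)
              = ((‖(q j).eval δ‖ ^ 2 : ℝ) : ℂ) := by
            rw [Complex.mul_conj, Complex.sq_norm]
          rw [_root_.map_mul, Complex.conj_conj, Complex.conj_ofReal,
            show (((nrm b / sig2 q δ a : ℝ) : ℂ) * (q j).eval δ)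
                * (((nrm b / sig2 q δ m : ℝ) : ℂ) * (starRingEnd ℂ) ((q j).eval δ))
              = (((nrm b / sig2 q δ a : ℝ) : ℂ) * ((nrm b / sig2 q δ m : ℝ) : ℂ))
                * ((q j).eval δ * (starRingEnd ℂ) ((q j).eval δ)) from by ring,
            hmc]
          push_cast
          ring
      _ = (((nrm b / sig2 q δ a) * (nrm b / sig2 q δ m) * sig2 q δ m : ℝ) : ℂ) := by
          rw [← Complex.ofReal_sum]
          norm_cast
          simp [sig2, ← Finset.mul_sum]
      _ = ((nrm b ^ 2 / sig2 q δ a : ℝ) : ℂ) := by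
          norm_cast
          field_simp [(hs2pos m).ne', (hs2pos a).ne']
  have hbv0 : b = ((nrm b : ℝ) : ℂ) • v 0 := by
    rw [hv1, smul_smul, ← Complex.ofReal_mul, mul_inv_cancel₀ hnb.ne', Complex.ofReal_one,
      one_smul]
  have hrb : ∀ m : ℕ, m < N →
      inn (rho v b q δ m) b = ((nrm b ^ 2 / sig2 q δ m : ℝ) : ℂ) := by
    intro m hm
    calc inn (rho v b q δ m) b
        = inn (rho v b q δ m) (∑ j ∈ range 1, ((nrm b : ℝ) : ℂ) • v j) := by
          rw [Finset.sum_range_one, ← hbv0]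
      _ = ∑ j ∈ range (min (m + 1) 1),
            (starRingEnd ℂ)
                (((nrm b / sig2 q δ m : ℝ) : ℂ) * (starRingEnd ℂ) ((q j).eval δ))
              * ((nrm b : ℝ) : ℂ) := by
          rw [rho]
          exact inn_osum v horth (by omega) hN _ _
      _ = ((nrm b ^ 2 / sig2 q δ m : ℝ) : ℂ) := by
          rw [min_eq_right (by omega), Finset.sum_range_one, _root_.map_mul, Complex.conj_conj,
            Complex.conj_ofReal, hq0e]
          push_cast
          ring
  have hmem : ∀ m, m < N → ∀ j ≤ m, v j ∈
      Submodule.span ℂ {x : Fin n → ℂ | ∃ j < m, x = (A - δ • 1).mulVec (v j)}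
        ⊔ Submodule.span ℂ {rho v b q δ m} := by
    intro m
    induction m with
    | zero =>
      intro _ j hj
      have hj0 : j = 0 := Nat.le_zero.mp hj
      subst hj0
      apply Submodule.mem_sup_right
      rw [Submodule.mem_span_singleton]
      refine ⟨((nrm b : ℝ) : ℂ)⁻¹, ?_⟩
      have hs20 : sig2 q δ 0 = 1 := by simp [sig2, hq0e]
      have hrho0 : rho v b q δ 0 = ((nrm b : ℝ) : ℂ) • v 0 := by
        rw [rho, Finset.sum_range_one, hs20, hq0e]
        simp
      rw [hrho0, smul_smul, inv_mul_cancel₀ (by exact_mod_cast hnb.ne'), one_smul]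
    | succ m ih =>
      intro hm1 j hj
      have hmN : m < N := Nat.lt_of_succ_lt hm1
      have ihm := ih hmN
      have hHre := hsub m hm1
      have hHcr : Hc H (m + 1) m = (((H ⟨m + 1, hm1⟩ ⟨m, hmN⟩).re : ℝ) : ℂ) := by
        rw [Hc_eq H hm1 hmN]
        exact Complex.ext (by simp) (by simp [hHre.2])
      have hHne : Hc H (m + 1) m ≠ 0 := by
        rw [hHcr]
        exact Complex.ofReal_ne_zero.mpr hHre.1.ne'
      set c1 : ℂ := ((nrm b / sig2 q δ (m + 1) : ℝ) : ℂ)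
        * (starRingEnd ℂ) ((q (m + 1)).eval δ) with hc1
      set β : ℂ := -c1 / Hc H (m + 1) m with hβ
      have hWm := hWsum m hm1
      have hlast : c1 + β * (Hc H (m + 1) m - if (m + 1) = m then δ else 0) = 0 := by
        rw [if_neg (by omega : ¬ m + 1 = m), sub_zero, hβ, div_mul_cancel₀ _ hHne]
        ring
      have hee : rho v b q δ m - rho v b q δ (m + 1) - β • ((A - δ • 1).mulVec (v m))
          = ∑ i ∈ range (m + 1),
              ((((nrm b / sig2 q δ m : ℝ) : ℂ) * (starRingEnd ℂ) ((q i).eval δ))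
                - (((nrm b / sig2 q δ (m + 1) : ℝ) : ℂ) * (starRingEnd ℂ) ((q i).eval δ))
                - β * (Hc H i m - if i = m then δ else 0)) • v i := by
        rw [hWm]
        exact sum_combine3 v m _ _ _ β hlast
      have heV : rho v b q δ m - rho v b q δ (m + 1) - β • ((A - δ • 1).mulVec (v m))
          ∈ Submodule.span ℂ {x : Fin n → ℂ | ∃ j < m, x = (A - δ • 1).mulVec (v j)}
            ⊔ Submodule.span ℂ {rho v b q δ m} := by
        rw [hee]
        exact Submodule.sum_mem _ fun i hi => Submodule.smul_mem _ _
          (ihm i (Nat.lt_succ_iff.mp (Finset.mem_range.mp hi)))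
      obtain ⟨s, hs, t, ht, hst⟩ := Submodule.mem_sup.mp heV
      obtain ⟨γ, rfl⟩ := Submodule.mem_span_singleton.mp ht
      have hC : ((nrm b ^ 2 / sig2 q δ (m + 1) : ℝ) : ℂ) ≠ 0 :=
        Complex.ofReal_ne_zero.mpr (div_pos (pow_pos hnb 2) (hs2pos _)).ne'
      have hip : inn (rho v b q δ (m + 1))
          (rho v b q δ m - rho v b q δ (m + 1) - β • ((A - δ • 1).mulVec (v m))) = 0 := by
        rw [inn_sub_right, inn_sub_right, inn_smul_right,
          hrr (m + 1) m (by omega) hm1, hrr (m + 1) (m + 1) le_rfl hm1,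
          inn_conj (rho v b q δ (m + 1)) ((A - δ • 1).mulVec (v m)),
          hWrho (m + 1) m hm1 (Nat.lt_succ_self m)]
        simp
      rw [← hst, inn_add_right, inn_smul_right,
        inn_conj (rho v b q δ (m + 1)) s, hSperp m (m + 1) (by omega) hm1 s hs,
        hrr (m + 1) m (by omega) hm1, map_zero, zero_add] at hip
      have hγ : γ = 0 := (mul_eq_zero.mp hip).resolve_right hC
      have hemem : rho v b q δ m - rho v b q δ (m + 1) - β • ((A - δ • 1).mulVec (v m))
          ∈ Submodule.span ℂ {x : Fin n → ℂ | ∃ j < m, x = (A - δ • 1).mulVec (v j)} := by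
        rw [← hst, hγ, zero_smul, add_zero]
        exact hs
      have hρm : rho v b q δ m ∈
          Submodule.span ℂ {x : Fin n → ℂ | ∃ j < m + 1, x = (A - δ • 1).mulVec (v j)}
            ⊔ Submodule.span ℂ {rho v b q δ (m + 1)} := by
        have h1 : rho v b q δ m = rho v b q δ (m + 1) + β • ((A - δ • 1).mulVec (v m))
            + (rho v b q δ m - rho v b q δ (m + 1) - β • ((A - δ • 1).mulVec (v m))) := by
          abel
        rw [h1]
        refine Submodule.add_mem _ (Submodule.add_mem _ ?_ ?_) ?_
        · exact Submodule.mem_sup_right (Submodule.mem_span_singleton_self _)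
        · exact Submodule.mem_sup_left (Submodule.smul_mem _ _
            (Submodule.subset_span ⟨m, Nat.lt_succ_self m, rfl⟩))
        · exact Submodule.mem_sup_left
            ((Submodule.span_mono fun x hx => by
              obtain ⟨j', hj', hx'⟩ := hx; exact ⟨j', by omega, hx'⟩) hemem)
      have hsup : Submodule.span ℂ {x : Fin n → ℂ | ∃ j < m, x = (A - δ • 1).mulVec (v j)}
            ⊔ Submodule.span ℂ {rho v b q δ m}
          ≤ Submodule.span ℂ {x : Fin n → ℂ | ∃ j < m + 1, x = (A - δ • 1).mulVec (v j)}
            ⊔ Submodule.span ℂ {rho v b q δ (m + 1)} :=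
        sup_le (le_trans (Submodule.span_mono fun x hx => by
            obtain ⟨j', hj', hx'⟩ := hx; exact ⟨j', by omega, hx'⟩) le_sup_left)
          ((Submodule.span_singleton_le_iff_mem _ _).mpr hρm)
      rcases Nat.lt_or_ge j (m + 1) with hj' | hj'
      · exact hsup (ihm j (by omega))
      · have hjm : j = m + 1 := by omega
        subst hjm
        have hvj : v (m + 1) = ((Hc H (m + 1) m - if m + 1 = m then δ else 0))⁻¹
            • ((A - δ • 1).mulVec (v m)
              - ∑ i ∈ range (m + 1), (Hc H i m - if i = m then δ else 0) • v i) :=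
          extract_last v m (fun i => Hc H i m - if i = m then δ else 0) _ hWm
            (by show (Hc H (m + 1) m - if m + 1 = m then δ else 0) ≠ 0
                rw [if_neg (by omega : ¬ m + 1 = m), sub_zero]; exact hHne)
        rw [hvj]
        refine Submodule.smul_mem _ _ (Submodule.sub_mem _ ?_ ?_)
        · exact Submodule.mem_sup_left (Submodule.subset_span ⟨m, Nat.lt_succ_self m, rfl⟩)
        · exact Submodule.sum_mem _ fun i hi => Submodule.smul_mem _ _
            (hsup (ihm i (Nat.lt_succ_iff.mp (Finset.mem_range.mp hi))))
  have hbmem : ∀ m, m < N → b - rho v b q δ m ∈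
      Submodule.span ℂ {x : Fin n → ℂ | ∃ j < m, x = (A - δ • 1).mulVec (v j)} := by
    intro m hm
    have h0 : b ∈ Submodule.span ℂ {x : Fin n → ℂ | ∃ j < m, x = (A - δ • 1).mulVec (v j)}
        ⊔ Submodule.span ℂ {rho v b q δ m} := by
      have h0' := Submodule.smul_mem _ ((nrm b : ℝ) : ℂ) (hmem m hm 0 (Nat.zero_le m))
      rwa [← hbv0] at h0'
    obtain ⟨s, hs, t, ht, hst⟩ := Submodule.mem_sup.mp h0
    obtain ⟨γ, rfl⟩ := Submodule.mem_span_singleton.mp ht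
    have hC : ((nrm b ^ 2 / sig2 q δ m : ℝ) : ℂ) ≠ 0 :=
      Complex.ofReal_ne_zero.mpr (div_pos (pow_pos hnb 2) (hs2pos _)).ne'
    have h1 : inn (rho v b q δ m) (s + γ • rho v b q δ m)
        = ((nrm b ^ 2 / sig2 q δ m : ℝ) : ℂ) := by
      rw [hst]; exact hrb m hm
    rw [inn_add_right, inn_smul_right, inn_conj (rho v b q δ m) s,
      hSperp m m le_rfl hm s hs, hrr m m le_rfl hm, map_zero, zero_add] at h1
    have hγ : γ = 1 := by
      have := mul_right_cancel₀ hC (by rw [h1, one_mul] : γ * ((nrm b ^ 2 / sig2 q δ m : ℝ) : ℂ)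
        = 1 * ((nrm b ^ 2 / sig2 q δ m : ℝ) : ℂ))
      exact this
    rw [hγ, one_smul] at hst
    have h2 : s = b - rho v b q δ m := eq_sub_of_add_eq hst
    rw [← h2]
    exact hs
  have hrrho : ∀ m, m < N → r δ m = rho v b q δ m := by
    intro m hm
    have hd : (b - u δ m) - rho v b q δ m
        ∈ Submodule.span ℂ {x : Fin n → ℂ | ∃ j < m, x = (A - δ • 1).mulVec (v j)} := by
      have h2 : (b - u δ m) - rho v b q δ m = (b - rho v b q δ m) - u δ m := by abel
      rw [h2]
      exact Submodule.sub_mem _ (hbmem m hm) (humem δ m hm)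
    have h1 : inn ((b - u δ m) - rho v b q δ m) (b - u δ m) = 0 := huperp δ m hm _ hd
    have h2 : inn ((b - u δ m) - rho v b q δ m) (rho v b q δ m) = 0 :=
      hSperp m m le_rfl hm _ hd
    have h3 : inn ((b - u δ m) - rho v b q δ m) ((b - u δ m) - rho v b q δ m) = 0 := by
      rw [inn_sub_right, h1, h2, sub_zero]
    rw [hr δ m]
    exact sub_eq_zero.mp (inn_self_eq_zero h3)
  obtain ⟨m, rfl⟩ : ∃ m, k = m + 1 := ⟨k - 1, by omega⟩
  simp only [Nat.add_sub_cancel] at hτ ⊢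
  have hmN : m < N := by omega
  have main : ∀ R : ℝ, 0 < R → Hc H (m + 1) m = ((R : ℝ) : ℂ) →
      sigmaP q δ m / sigmaP q δ (m + 1) = R / Real.sqrt (R ^ 2 + ‖τ‖ ^ 2) ∧
      (-1 : ℂ) ^ (m + 1) * (q (m + 1)).eval δ / (sigmaP q δ (m + 1) : ℂ)
        = τ / ((Real.sqrt (R ^ 2 + ‖τ‖ ^ 2) : ℝ) : ℂ) := by
    intro R hRpos hRc
    have hσm : (0 : ℝ) < Real.sqrt (sig2 q δ m) := Real.sqrt_pos.mpr (hs2pos m)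
    have hσk : (0 : ℝ) < Real.sqrt (sig2 q δ (m + 1)) := Real.sqrt_pos.mpr (hs2pos (m + 1))
    have hnrmρ : nrm (rho v b q δ m) = nrm b / Real.sqrt (sig2 q δ m) := by
      rw [nrm, hrr m m le_rfl hmN, Complex.ofReal_re,
        Real.sqrt_div (sq_nonneg _), Real.sqrt_sq hnb.le]
    have hiW : inn (rho v b q δ m) ((A - δ • 1).mulVec (v m))
        = -(((nrm b / sig2 q δ m : ℝ) : ℂ) * (Hc H (m + 1) m * (q (m + 1)).eval δ)) := by
      calc inn (rho v b q δ m) ((A - δ • 1).mulVec (v m))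
          = ∑ i ∈ range (min (m + 1) (m + 2)),
              (starRingEnd ℂ)
                  (((nrm b / sig2 q δ m : ℝ) : ℂ) * (starRingEnd ℂ) ((q i).eval δ))
                * (Hc H i m - if i = m then δ else 0) := by
            rw [rho, hWsum m hkN]
            exact inn_osum v horth (by omega) (by omega) _ _
        _ = ((nrm b / sig2 q δ m : ℝ) : ℂ)
            * ∑ i ∈ range (m + 1), (Hc H i m - if i = m then δ else 0) * (q i).eval δ := by
            rw [min_eq_left (by omega), Finset.mul_sum]
            exact Finset.sum_congr rfl fun i _ => by
              rw [_root_.map_mul, Complex.conj_conj, Complex.conj_ofReal]; ring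
        _ = _ := by
            have hk2 := hkey m hkN
            rw [Finset.sum_range_succ, if_neg (by omega : ¬ m + 1 = m), sub_zero] at hk2
            have h5 : ∑ i ∈ range (m + 1), (Hc H i m - if i = m then δ else 0) * (q i).eval δ
                = -(Hc H (m + 1) m * (q (m + 1)).eval δ) := by linear_combination hk2
            rw [h5]
            ring
    have hsc : ((nrm b / Real.sqrt (sig2 q δ m))⁻¹ : ℝ) * (nrm b / sig2 q δ m)
        = (Real.sqrt (sig2 q δ m))⁻¹ := by
      rw [← Real.sq_sqrt (hs2pos m).le]
      field_simp [hnb.ne', hσm.ne']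
      rw [Real.sqrt_sq hσm.le]
    have hsc' : (((nrm b / Real.sqrt (sig2 q δ m))⁻¹ : ℝ) : ℂ)
        * ((nrm b / sig2 q δ m : ℝ) : ℂ) = (((Real.sqrt (sig2 q δ m))⁻¹ : ℝ) : ℂ) := by
      exact_mod_cast congrArg (fun t : ℝ => (t : ℂ)) hsc
    have hτv : τ = (-1 : ℂ) ^ (m + 1) * (((Real.sqrt (sig2 q δ m))⁻¹ : ℝ) : ℂ)
        * ((R : ℝ) : ℂ) * (q (m + 1)).eval δ := by
      rw [hτ, hw δ m, hrrho m hmN, inn_smul_left, Complex.conj_ofReal, hiW, hnrmρ, hRc]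
      linear_combination ((-1 : ℂ) ^ (m + 1) * ((R : ℝ) : ℂ) * (q (m + 1)).eval δ) * hsc'
    have habs : ‖τ‖
        = (Real.sqrt (sig2 q δ m))⁻¹ * R * ‖(q (m + 1)).eval δ‖ := by
      rw [hτv]
      simp [_root_.map_mul, map_pow, Complex.norm_real, abs_of_pos hRpos,
        abs_of_nonneg (inv_nonneg.mpr (Real.sqrt_nonneg _)), mul_assoc]
    have hs2succ : sig2 q δ (m + 1) = sig2 q δ m + ‖(q (m + 1)).eval δ‖ ^ 2 := by
      rw [sig2, sig2, Finset.sum_range_succ]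
    have hsqrt : Real.sqrt (R ^ 2 + ‖τ‖ ^ 2)
        = R * Real.sqrt (sig2 q δ (m + 1)) / Real.sqrt (sig2 q δ m) := by
      have h6 : R ^ 2 + ‖τ‖ ^ 2
          = (R * Real.sqrt (sig2 q δ (m + 1)) / Real.sqrt (sig2 q δ m)) ^ 2 := by
        rw [habs, hs2succ]
        have hss := Real.sq_sqrt (hs2pos m).le
        generalize hgen : Real.sqrt (sig2 q δ m) = t at hσm hss ⊢
        simp only [← hss, div_pow, mul_pow]
        rw [Real.sq_sqrt (by positivity : (0 : ℝ) ≤ t ^ 2 + ‖(q (m + 1)).eval δ‖ ^ 2)]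
        field_simp
      rw [h6, Real.sqrt_sq (by positivity)]
    constructor
    · rw [hsqrt, show sigmaP q δ m = Real.sqrt (sig2 q δ m) from rfl,
        show sigmaP q δ (m + 1) = Real.sqrt (sig2 q δ (m + 1)) from rfl]
      field_simp
    · rw [hsqrt, hτv, show sigmaP q δ (m + 1) = Real.sqrt (sig2 q δ (m + 1)) from rfl]
      have c1 : ((Real.sqrt (sig2 q δ m) : ℝ) : ℂ) ≠ 0 := Complex.ofReal_ne_zero.mpr hσm.ne'
      have c2 : ((Real.sqrt (sig2 q δ (m + 1)) : ℝ) : ℂ) ≠ 0 :=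
        Complex.ofReal_ne_zero.mpr hσk.ne'
      have c3 : ((R : ℝ) : ℂ) ≠ 0 := Complex.ofReal_ne_zero.mpr hRpos.ne'
      push_cast
      field_simp
  exact main _ (hsub m hkN).1
    (by
      rw [Hc_eq H hkN hmN]
      refine Complex.ext ?_ ?_
      · simp
      · rw [Complex.ofReal_im]; exact (hsub m hkN).2)
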